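/- For any β in T_n and any n ≥ 2, the row vector F^R = (U_0(1/x), U_1(1/x), ..., U_{n−1}(1/x)) of length n satisfies F^R · ψ_{n+1}(ι^R(β)) = F^R, where ι^R : T_n → T_{n+1} is the inclusion t_i ↦ t_i; and similarly F^L = (U_{n−1}(1/x), ..., U_1(1/x), U_0(1/x)) satisfies F^L · ψ_{n+1}(ι^L(β)) = F^L, where ι^L(t_i) = t_{i+1}. -/

import Mathlib

open Matrix Polynomial

/-- Deformed Tits matrix `V_i` (generator index `i` is 1-based, `1 ≤ i ≤ m`):
the identity `m × m` matrix except column `i`, which has `-1` on the diagonal,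
`y` in row `i-1` and `x` in row `i+1`. -/
def Vmat {R : Type*} [CommRing R] (x y : R) (m i : ℕ) : Matrix (Fin m) (Fin m) R :=
  Matrix.of fun r c =>
    if (c : ℕ) + 1 = i then
      if (r : ℕ) + 1 = i then -1
      else if (r : ℕ) + 2 = i then y
      else if (r : ℕ) = i then x
      else 0
    else if r = c then 1 else 0

/-- Relators of the twin group with `m` generators (the twin group on `m+1` strands). -/
def twinRels (m : ℕ) : Set (FreeGroup (Fin m)) :=
  {r | (∃ i, r = FreeGroup.of i * FreeGroup.of i) ∨
       (∃ i j : Fin m, (i : ℕ) + 1 < (j : ℕ) ∧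
          r = FreeGroup.of i * FreeGroup.of j * (FreeGroup.of i)⁻¹ * (FreeGroup.of j)⁻¹)}

/-- The twin group `T_{m+1}` on `m+1` strands, with `m` generators `t_1, …, t_m`;
the generator `t_{i+1}` is `TwinGroup.of i` for `i : Fin m`. -/
def TwinGroup (m : ℕ) : Type := PresentedGroup (twinRels m)

instance (m : ℕ) : Group (TwinGroup m) :=
  inferInstanceAs (Group (PresentedGroup (twinRels m)))

/-- The generator `t_{i+1}` of the twin group. -/
def TwinGroup.of {m : ℕ} (i : Fin m) : TwinGroup m := PresentedGroup.of i

/-- The field `ℤ(x)` of rational functions over `ℤ`. -/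
noncomputable abbrev Zx : Type := FractionRing (Polynomial ℤ)

/-- The element `x` of `ℤ(x)`. -/
noncomputable def xx : Zx := algebraMap (Polynomial ℤ) Zx Polynomial.X

/-- `U_n(1/x)` as an element of `ℤ(x)`, `U_n` the `n`-th Chebyshev polynomial
of the second kind. -/
noncomputable def Ux (n : ℕ) : Zx := Polynomial.eval xx⁻¹ (Polynomial.Chebyshev.U Zx n)

lemma xx_ne : xx ≠ 0 := by
  rw [xx, Ne, IsFractionRing.to_map_eq_zero_iff]
  exact X_ne_zero

lemma Ux_zero : Ux 0 = 1 := by simp [Ux]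

lemma Ux_one : Ux 1 = 2 * xx⁻¹ := by simp [Ux]

lemma xx_Ux_one : xx * Ux 1 = 2 := by
  rw [Ux_one]
  have hx : xx * xx⁻¹ = 1 := mul_inv_cancel₀ xx_ne
  linear_combination 2 * hx

lemma Ux_rec (k : ℕ) : xx * (Ux k + Ux (k + 2)) = 2 * Ux (k + 1) := by
  have h : Ux (k + 2) = 2 * xx⁻¹ * Ux (k + 1) - Ux k := by
    simp only [Ux]
    push_cast
    rw [Polynomial.Chebyshev.U_add_two]
    simp
  have hx : xx * xx⁻¹ = 1 := mul_inv_cancel₀ xx_ne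
  rw [h]
  linear_combination 2 * Ux (↑k + 1) * hx

lemma sum_ite_coe {n a : ℕ} (f : Fin n → Zx) :
    ∑ r : Fin n, (if (r : ℕ) = a then f r else 0) =
      if h : a < n then f ⟨a, h⟩ else 0 := by
  split_ifs with h
  · rw [Finset.sum_eq_single (⟨a, h⟩ : Fin n)]
    · simp
    · intro b _ hb; exact if_neg (fun hb' => hb (Fin.ext hb'))
    · intro hb; exact absurd (Finset.mem_univ _) hb
  · refine Finset.sum_eq_zero fun r _ => if_neg fun hr => h ?_
    have := r.2; omega

lemma vecMul_Vmat_apply {n : ℕ} (v : Fin n → Zx) (i : ℕ) (c : Fin n) :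
    (v ᵥ* Vmat xx xx n i) c =
      if (c : ℕ) + 1 = i then
        (if h : (c : ℕ) + 1 < n then xx * v ⟨(c : ℕ) + 1, h⟩ else 0)
        + (if 1 ≤ (c : ℕ) then
            xx * v ⟨(c : ℕ) - 1, lt_of_le_of_lt (Nat.sub_le _ _) c.2⟩ else 0)
        - v c
      else v c := by
  by_cases h : (c : ℕ) + 1 = i
  · rw [if_pos h]
    subst h
    simp only [Matrix.vecMul, dotProduct, Vmat, Matrix.of_apply, eq_self_iff_true, if_true]
    have key : ∀ r : Fin n,
        v r * (if (r : ℕ) + 1 = (c : ℕ) + 1 then (-1 : Zx)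
          else if (r : ℕ) + 2 = (c : ℕ) + 1 then xx
          else if (r : ℕ) = (c : ℕ) + 1 then xx else 0)
        = (if (r : ℕ) = (c : ℕ) + 1 then xx * v r else 0)
          + ((if 1 ≤ (c : ℕ) then (if (r : ℕ) = (c : ℕ) - 1 then xx * v r else 0) else 0)
          + (if (r : ℕ) = (c : ℕ) then -(v r) else 0)) := by
      intro r
      split_ifs <;> first | omega | ring
    rw [Finset.sum_congr rfl fun r _ => key r, Finset.sum_add_distrib,
      Finset.sum_add_distrib, sum_ite_coe (fun r => xx * v r),
      sum_ite_coe (fun r => -(v r))]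
    rw [dif_pos c.2]
    have h3 : (⟨(c : ℕ), c.2⟩ : Fin n) = c := rfl
    rw [h3]
    have hB : ∑ r : Fin n,
        (if 1 ≤ (c : ℕ) then (if (r : ℕ) = (c : ℕ) - 1 then xx * v r else 0) else 0)
        = if 1 ≤ (c : ℕ) then
            xx * v ⟨(c : ℕ) - 1, lt_of_le_of_lt (Nat.sub_le _ _) c.2⟩ else 0 := by
      rcases Nat.eq_zero_or_pos (c : ℕ) with h1 | h1
      · rw [if_neg (by omega), Finset.sum_eq_zero fun r _ => if_neg (by omega)]
      · have h1' : 1 ≤ (c : ℕ) := h1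
        rw [if_pos h1']
        have : ∀ r : Fin n, (if 1 ≤ (c : ℕ) then (if (r : ℕ) = (c : ℕ) - 1
              then xx * v r else 0) else 0)
            = if (r : ℕ) = (c : ℕ) - 1 then xx * v r else 0 :=
          fun r => if_pos h1'
        rw [Finset.sum_congr rfl fun r _ => this r, sum_ite_coe (fun r => xx * v r),
          dif_pos (lt_of_le_of_lt (Nat.sub_le _ _) c.2)]
    rw [hB, sub_eq_add_neg, add_assoc]
  · rw [if_neg h]
    simp only [Matrix.vecMul, dotProduct, Vmat, Matrix.of_apply, if_neg h]
    have key : ∀ r : Fin n, v r * (if r = c then (1 : Zx) else 0)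
        = if r = c then v r else 0 := fun r => by split_ifs <;> ring
    rw [Finset.sum_congr rfl fun r _ => key r, Finset.sum_ite_eq' Finset.univ c v,
      if_pos (Finset.mem_univ c)]

lemma fixR {m : ℕ} (i : Fin m) :
    (fun j : Fin (m+1) => Ux j) ᵥ* Vmat xx xx (m+1) ((i : ℕ) + 1)
      = fun j : Fin (m+1) => Ux j := by
  funext c
  rw [vecMul_Vmat_apply]
  split_ifs with h h1 h2 h2
  · -- c = i < m so c+1 < m+1
    rcases Nat.eq_zero_or_pos (c : ℕ) with hc | hc
    · exfalso; omega
    · obtain ⟨c', hc'⟩ : ∃ c', (c : ℕ) = c' + 1 := ⟨(c : ℕ) - 1, by omega⟩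
      show xx * Ux ((c : ℕ) + 1) + xx * Ux ((c : ℕ) - 1) - Ux (c : ℕ) = Ux (c : ℕ)
      rw [hc']
      have e : c' + 1 - 1 = c' := by omega
      rw [e]
      linear_combination Ux_rec c'
  · -- (c:ℕ) = 0 case
    have hc : (c : ℕ) = 0 := by omega
    show xx * Ux ((c : ℕ) + 1) + 0 - Ux (c : ℕ) = Ux (c : ℕ)
    rw [hc, Ux_zero]
    linear_combination xx_Ux_one
  · exfalso; have := i.2; omega
  · exfalso; have := i.2; omega
  · rfl

lemma fixL {m : ℕ} (i : Fin m) :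
    (fun j : Fin (m+1) => Ux (m - (j : ℕ))) ᵥ* Vmat xx xx (m+1) ((i : ℕ) + 2)
      = fun j : Fin (m+1) => Ux (m - (j : ℕ)) := by
  have him := i.2
  funext c
  rw [vecMul_Vmat_apply]
  split_ifs with h h1 h2 h2
  · -- 1 ≤ c ≤ m, c+1 < m+1 i.e. c < m
    obtain ⟨d, hd⟩ : ∃ d, m - (c : ℕ) = d + 1 := ⟨m - (c : ℕ) - 1, by omega⟩
    show xx * Ux (m - ((c : ℕ) + 1)) + xx * Ux (m - ((c : ℕ) - 1)) - Ux (m - (c : ℕ))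
      = Ux (m - (c : ℕ))
    have e1 : m - ((c : ℕ) + 1) = d := by omega
    have e2 : m - ((c : ℕ) - 1) = d + 2 := by omega
    rw [e1, e2, hd]
    linear_combination Ux_rec d
  · exfalso; omega
  · -- c = m
    have hc : (c : ℕ) = m := by omega
    show 0 + xx * Ux (m - ((c : ℕ) - 1)) - Ux (m - (c : ℕ)) = Ux (m - (c : ℕ))
    have e2 : m - ((c : ℕ) - 1) = 1 := by omega
    have e3 : m - (c : ℕ) = 0 := by omega
    rw [e2, e3, Ux_zero]
    linear_combination xx_Ux_one
  · exfalso; omega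
  · rfl

/-- Proposition 3.5: for `β ∈ T_n` (`n = m+1 ≥ 2`), the row vectors
`F^R = (U_0(1/x), …, U_{n-1}(1/x))` and `F^L = (U_{n-1}(1/x), …, U_0(1/x))`
satisfy `F^R ψ_{n+1}(ι^R β) = F^R` and `F^L ψ_{n+1}(ι^L β) = F^L`. -/
theorem stmt4 (m : ℕ) (hm : 1 ≤ m)
    (ψ : TwinGroup (m+1) →* Matrix (Fin (m+1)) (Fin (m+1)) Zx)
    (hψ : ∀ i : Fin (m+1), ψ (TwinGroup.of i) = Vmat xx xx (m+1) ((i : ℕ) + 1))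
    (ιR ιL : TwinGroup m →* TwinGroup (m+1))
    (hιR : ∀ i : Fin m, ιR (TwinGroup.of i) = TwinGroup.of i.castSucc)
    (hιL : ∀ i : Fin m, ιL (TwinGroup.of i) = TwinGroup.of i.succ)
    (β : TwinGroup m) :
    (fun j : Fin (m+1) => Ux j) ᵥ* ψ (ιR β) = (fun j : Fin (m+1) => Ux j) ∧
    (fun j : Fin (m+1) => Ux (m - j)) ᵥ* ψ (ιL β) = (fun j : Fin (m+1) => Ux (m - j)) := by
  set vR : Fin (m+1) → Zx := fun j => Ux j with hvR
  set vL : Fin (m+1) → Zx := fun j => Ux (m - j) with hvL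
  let H : Subgroup (TwinGroup m) :=
    { carrier := {g | vR ᵥ* ψ (ιR g) = vR ∧ vL ᵥ* ψ (ιL g) = vL}
      one_mem' := by simp [Matrix.vecMul_one]
      mul_mem' := by
        rintro a b ⟨ha1, ha2⟩ ⟨hb1, hb2⟩
        constructor
        · rw [_root_.map_mul, _root_.map_mul, ← Matrix.vecMul_vecMul, ha1, hb1]
        · rw [_root_.map_mul, _root_.map_mul, ← Matrix.vecMul_vecMul, ha2, hb2]
      inv_mem' := by
        rintro a ⟨ha1, ha2⟩
        constructor
        · conv_lhs => rw [← ha1]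
          rw [Matrix.vecMul_vecMul, ← _root_.map_mul, ← _root_.map_mul, mul_inv_cancel, _root_.map_one,
            _root_.map_one, Matrix.vecMul_one]
        · conv_lhs => rw [← ha2]
          rw [Matrix.vecMul_vecMul, ← _root_.map_mul, ← _root_.map_mul, mul_inv_cancel, _root_.map_one,
            _root_.map_one, Matrix.vecMul_one] }
  have hgen : ∀ i : Fin m, TwinGroup.of i ∈ H := by
    intro i
    constructor
    · rw [hιR i, hψ, hvR]
      have : ((i.castSucc : Fin (m+1)) : ℕ) + 1 = (i : ℕ) + 1 := by simp
      rw [this]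
      exact fixR i
    · rw [hιL i, hψ, hvL]
      have : ((i.succ : Fin (m+1)) : ℕ) + 1 = (i : ℕ) + 2 := by simp
      rw [this]
      exact fixL i
  have htop : H = ⊤ := by
    erw [eq_top_iff, ← PresentedGroup.closure_range_of (twinRels m)]
    apply Subgroup.closure_le H |>.2
    rintro _ ⟨i, rfl⟩
    exact hgen i
  have : β ∈ H := htop ▸ Subgroup.mem_top β
  exact this
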